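/- arXiv:2110.01899 — 2 statements merged into one kernel-verified Lean document; each statement's English description precedes it below -/
import Mathlib

section
/- Let Z be a standard Gaussian random variable and f : ℝ → ℝ continuously differentiable with E[f(Z)²] < ∞ and E[f'(Z)²] < ∞. Then Var(f(Z)) ≥ (E[f'(Z)])². In particular, for σ continuously differentiable and τ > 0, the coefficient d₀ = E[σ(√τ Z)²] − (E[σ(√τ Z)])² − τ(E[σ'(√τ Z)])² is nonnegative. -/
open MeasureTheory ProbabilityTheory Filter Real
open scoped ENNReal NNReal Topology

noncomputable def gpdf (x : ℝ) : ℝ := gaussianPDFReal 0 1 x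

lemma gpdf_eq (x : ℝ) : gpdf x = (Real.sqrt (2 * Real.pi))⁻¹ * Real.exp (-x ^ 2 / 2) := by
  simp [gpdf, gaussianPDFReal]

lemma gpdf_pos (x : ℝ) : 0 < gpdf x := gaussianPDFReal_pos 0 1 x one_ne_zero

lemma gr_eq : gaussianReal 0 1 = volume.withDensity (fun x => ENNReal.ofReal (gpdf x)) := by
  rw [gaussianReal_of_var_ne_zero 0 one_ne_zero]; rfl

lemma integral_gr (g : ℝ → ℝ) :
    ∫ x, g x ∂(gaussianReal 0 1) = ∫ x, gpdf x * g x := by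
  rw [gr_eq]
  have hm : Measurable (fun x => (gpdf x).toNNReal) :=
    (measurable_gaussianPDFReal 0 1).real_toNNReal
  rw [show (fun x => ENNReal.ofReal (gpdf x)) = (fun x => ((gpdf x).toNNReal : ℝ≥0∞)) from rfl,
    integral_withDensity_eq_integral_smul hm g]
  congr 1; ext x
  simp [NNReal.smul_def, Real.coe_toNNReal _ (gpdf_pos x).le]

lemma continuous_gpdf : Continuous gpdf := by
  have : gpdf = fun x => (Real.sqrt (2 * Real.pi))⁻¹ * Real.exp (-x ^ 2 / 2) := funext gpdf_eq
  rw [this]; continuity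

lemma integrable_gr_iff (g : ℝ → ℝ) :
    Integrable g (gaussianReal 0 1) ↔ Integrable (fun x => gpdf x * g x) := by
  rw [gr_eq]
  have hm : Measurable (fun x => (gpdf x).toNNReal) :=
    (measurable_gaussianPDFReal 0 1).real_toNNReal
  rw [show (fun x => ENNReal.ofReal (gpdf x)) = (fun x => ((gpdf x).toNNReal : ℝ≥0∞)) from rfl,
    integrable_withDensity_iff_integrable_smul hm]
  constructor <;> intro h <;> refine h.congr (Filter.Eventually.of_forall fun x => ?_) <;>
    simp [NNReal.smul_def, Real.coe_toNNReal _ (gpdf_pos x).le]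

lemma hasDerivAt_gpdf (x : ℝ) : HasDerivAt gpdf (-x * gpdf x) x := by
  have h1 : HasDerivAt (fun x : ℝ => -x ^ 2 / 2) (-x) x := by
    have := ((hasDerivAt_pow 2 x).neg).div_const 2
    simpa using this.congr_deriv (by ring)
  have h2 := (h1.exp).const_mul (Real.sqrt (2 * Real.pi))⁻¹
  have : gpdf = fun x => (Real.sqrt (2 * Real.pi))⁻¹ * Real.exp (-x ^ 2 / 2) := by
    ext y; exact gpdf_eq y
  rw [this]
  refine h2.congr_deriv ?_
  beta_reduce
  ring

lemma gpdf_le (x : ℝ) : gpdf x ≤ Real.exp (-x ^ 2 / 2) := by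
  rw [gpdf_eq]
  have h2 : (1:ℝ) ≤ Real.sqrt (2 * Real.pi) := by
    rw [show (1:ℝ) = Real.sqrt 1 by simp]
    exact Real.sqrt_le_sqrt (by nlinarith [Real.pi_gt_three])
  nlinarith [Real.exp_pos (-x ^ 2 / 2), inv_le_one_of_one_le₀ h2,
    (Real.exp_pos (-x ^ 2 / 2)).le]

lemma tendsto_mul_gpdf_atTop (f : ℝ → ℝ) (hf : ContDiff ℝ 1 f) (C : ℝ) (hC0 : 0 ≤ C)
    (hC : ∀ x : ℝ, 0 ≤ x → (∫ t in (0:ℝ)..x, (deriv f t) ^ 2) ≤ C * Real.exp (x ^ 2 / 2)) :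
    Tendsto (fun x => f x * gpdf x) atTop (𝓝 0) := by
  have hf' : Continuous (deriv f) := hf.continuous_deriv le_rfl
  have hfc : Continuous f := hf.continuous
  -- the bound
  have key : ∀ x : ℝ, 0 ≤ x →
      |f x * gpdf x| ≤ |f 0| * Real.exp (-x ^ 2 / 2) + (x + C) / 2 * Real.exp (-x ^ 2 / 4) := by
    intro x hx
    have ftc : (∫ t in (0:ℝ)..x, deriv f t) = f x - f 0 :=
      intervalIntegral.integral_deriv_eq_sub
        (fun t _ => (hf.differentiable one_ne_zero).differentiableAt)
        (hf'.intervalIntegrable 0 x)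
    set ε : ℝ := Real.exp (x ^ 2 / 4) with hε
    have hεpos : 0 < ε := Real.exp_pos _
    have step1 : (∫ t in (0:ℝ)..x, |deriv f t|) ≤ x * ε / 2 + (∫ t in (0:ℝ)..x, (deriv f t) ^ 2) / (2 * ε) := by
      have mono : (∫ t in (0:ℝ)..x, |deriv f t|) ≤
          ∫ t in (0:ℝ)..x, (ε / 2 + (deriv f t) ^ 2 / (2 * ε)) := by
        apply intervalIntegral.integral_mono_on hx
          (hf'.abs.intervalIntegrable 0 x)
          (((continuous_const.add ((hf'.pow 2).div_const _))).intervalIntegrable 0 x)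
        intro t _
        have hsq : deriv f t ^ 2 = |deriv f t| ^ 2 := (sq_abs _).symm
        show |deriv f t| ≤ ε / 2 + deriv f t ^ 2 / (2 * ε)
        rw [hsq, ← sub_nonneg]
        have heq : ε / 2 + |deriv f t| ^ 2 / (2 * ε) - |deriv f t|
            = (ε - |deriv f t|) ^ 2 / (2 * ε) := by
          field_simp; ring
        rw [heq]; positivity
      calc (∫ t in (0:ℝ)..x, |deriv f t|) ≤ _ := mono
        _ = x * ε / 2 + (∫ t in (0:ℝ)..x, (deriv f t) ^ 2) / (2 * ε) := by
          rw [intervalIntegral.integral_add (f := fun _ => ε / 2) (g := fun t => deriv f t ^ 2 / (2 * ε)) (intervalIntegrable_const)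
            (((hf'.pow 2).div_const _).intervalIntegrable 0 x),
            intervalIntegral.integral_const, intervalIntegral.integral_div]
          simp [smul_eq_mul]; ring
    have step2 : |f x| ≤ |f 0| + x * ε / 2 + C * Real.exp (x ^ 2 / 2) / (2 * ε) := by
      have h1 : |f x - f 0| ≤ ∫ t in (0:ℝ)..x, |deriv f t| := by
        rw [← ftc]
        exact intervalIntegral.abs_integral_le_integral_abs hx
      have h2 := hC x hx
      have := abs_sub_abs_le_abs_sub (f x) (f 0)
      have hdiv : (∫ t in (0:ℝ)..x, (deriv f t) ^ 2) / (2 * ε) ≤ C * Real.exp (x ^ 2 / 2) / (2 * ε) := by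
        gcongr
      linarith [step1]
    have hεs : C * Real.exp (x ^ 2 / 2) / (2 * ε) = C / 2 * Real.exp (x ^ 2 / 4) := by
      have hsplit : Real.exp (x ^ 2 / 2) = Real.exp (x ^ 2 / 4) * Real.exp (x ^ 2 / 4) := by
        rw [← Real.exp_add]; ring_nf
      rw [hε, hsplit]; field_simp
    have hgp : 0 < gpdf x := gpdf_pos x
    have hgle := gpdf_le x
    have hq : Real.exp (-x ^ 2 / 2) * Real.exp (x ^ 2 / 4) = Real.exp (-x ^ 2 / 4) := by
      rw [← Real.exp_add]; ring_nf
    have hb : |f x * gpdf x| = |f x| * gpdf x := by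
      rw [abs_mul, abs_of_pos hgp]
    rw [hb]
    have hexp2 : Real.exp (-x ^ 2 / 2) ≤ Real.exp (-x ^ 2 / 4) := by
      apply Real.exp_le_exp.mpr; nlinarith [sq_nonneg x]
    calc |f x| * gpdf x ≤ (|f 0| + x * ε / 2 + C / 2 * ε) * gpdf x := by
          rw [hεs] at step2
          apply mul_le_mul_of_nonneg_right _ hgp.le
          linarith
      _ ≤ (|f 0| + x * ε / 2 + C / 2 * ε) * Real.exp (-x ^ 2 / 2) := by
          apply mul_le_mul_of_nonneg_left hgle
          positivity
      _ = |f 0| * Real.exp (-x ^ 2 / 2) + (x + C) / 2 * (ε * Real.exp (-x ^ 2 / 2)) := by ring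
      _ = |f 0| * Real.exp (-x ^ 2 / 2) + (x + C) / 2 * Real.exp (-x ^ 2 / 4) := by
          rw [show ε * Real.exp (-x ^ 2 / 2) = Real.exp (-x ^ 2 / 2) * Real.exp (x ^ 2 / 4) by ring, hq]
  -- limits
  have l1 : Tendsto (fun x : ℝ => Real.exp (-x ^ 2 / 2)) atTop (𝓝 0) := by
    apply Real.tendsto_exp_atBot.comp
    have hsq : Tendsto (fun x : ℝ => x ^ 2 / 2) atTop atTop :=
      (tendsto_pow_atTop two_ne_zero).atTop_div_const (by norm_num)
    have := tendsto_neg_atTop_atBot.comp hsq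
    refine this.congr fun x => by simp [Function.comp]; ring
  have l2 : Tendsto (fun x : ℝ => Real.exp (-x ^ 2 / 4)) atTop (𝓝 0) := by
    apply Real.tendsto_exp_atBot.comp
    have hsq : Tendsto (fun x : ℝ => x ^ 2 / 4) atTop atTop :=
      (tendsto_pow_atTop two_ne_zero).atTop_div_const (by norm_num)
    have := tendsto_neg_atTop_atBot.comp hsq
    refine this.congr fun x => by simp [Function.comp]; ring
  have l3 : Tendsto (fun x : ℝ => x * Real.exp (-x ^ 2 / 4)) atTop (𝓝 0) := by
    have ho := rpow_mul_exp_neg_mul_sq_isLittleO_exp_neg (by norm_num : (0:ℝ) < 1/4) 1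
    have ht := ho.tendsto_zero_of_tendsto
      (Real.tendsto_exp_atBot.comp <| tendsto_id.const_mul_atTop_of_neg (neg_lt_zero.mpr one_half_pos))
    refine ht.congr fun x => ?_
    rw [Real.rpow_one]
    congr 1
    ring
  have hlim : Tendsto (fun x : ℝ => |f 0| * Real.exp (-x ^ 2 / 2)
      + (x + C) / 2 * Real.exp (-x ^ 2 / 4)) atTop (𝓝 0) := by
    have := (l1.const_mul (|f 0|)).add ((l3.add (l2.const_mul C)).const_mul (1/2 : ℝ))
    simp only [mul_zero, add_zero, zero_add] at this
    refine this.congr fun x => by ring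
  apply squeeze_zero_norm' ?_ hlim
  filter_upwards [eventually_ge_atTop (0:ℝ)] with x hx
  exact key x hx

lemma gpdf_even (x : ℝ) : gpdf (-x) = gpdf x := by
  rw [gpdf_eq, gpdf_eq, neg_pow]
  norm_num

lemma integrable_sq_gr : Integrable (fun x : ℝ => x ^ 2) (gaussianReal 0 1) := by
  rw [integrable_gr_iff]
  have h := integrable_rpow_mul_exp_neg_mul_sq (b := 1/2) (by norm_num) (s := 2) (by norm_num)
  apply (h.const_mul ((Real.sqrt (2 * Real.pi))⁻¹)).congr
  apply Filter.Eventually.of_forall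
  intro x
  simp only [gpdf_eq]
  have hr : ∀ y : ℝ, y ^ (2:ℝ) = y ^ (2:ℕ) := fun y => by
    rw [show ((2:ℝ)) = ((2:ℕ):ℝ) by norm_num, Real.rpow_natCast]
  simp only [hr]
  ring_nf

lemma interval_sq_bound (h : ℝ → ℝ) (hcont : Continuous h) (hnn : ∀ t, 0 ≤ h t)
    (Ig : Integrable (fun t => gpdf t * h t)) (x : ℝ) (hx : 0 ≤ x) :
    (∫ t in (-x : ℝ)..x, h t) ≤
      (Real.sqrt (2 * Real.pi) * ∫ t, gpdf t * h t) * Real.exp (x ^ 2 / 2) := by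
  set K : ℝ := Real.sqrt (2 * Real.pi) * Real.exp (x ^ 2 / 2) with hK
  have h2pi : (0:ℝ) < Real.sqrt (2 * Real.pi) := Real.sqrt_pos.mpr (by positivity)
  have hKpos : 0 < K := by positivity
  have step1 : (∫ t in (-x : ℝ)..x, h t) ≤ ∫ t in (-x : ℝ)..x, K * (gpdf t * h t) := by
    apply intervalIntegral.integral_mono_on (by linarith)
      (hcont.intervalIntegrable _ _)
      ((continuous_const.mul (continuous_gpdf.mul hcont)).intervalIntegrable _ _)
    intro t ht
    have ht' : t ^ 2 ≤ x ^ 2 := by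
      rcases ht with ⟨h1, h2⟩
      nlinarith [abs_nonneg t]
    have hgp : (Real.sqrt (2 * Real.pi))⁻¹ * Real.exp (-x ^ 2 / 2) ≤ gpdf t := by
      rw [gpdf_eq]
      have : Real.exp (-x ^ 2 / 2) ≤ Real.exp (-t ^ 2 / 2) := by
        apply Real.exp_le_exp.mpr; linarith
      nlinarith [inv_pos.mpr h2pi]
    have h1K : 1 ≤ K * gpdf t := by
      have e1 : Real.exp (x ^ 2 / 2) * Real.exp (-x ^ 2 / 2) = 1 := by
        rw [← Real.exp_add, show x ^ 2 / 2 + -x ^ 2 / 2 = 0 by ring, Real.exp_zero]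
      have e2 : Real.sqrt (2 * Real.pi) * (Real.sqrt (2 * Real.pi))⁻¹ = 1 :=
        mul_inv_cancel₀ h2pi.ne'
      have : K * ((Real.sqrt (2 * Real.pi))⁻¹ * Real.exp (-x ^ 2 / 2)) = 1 := by
        calc K * ((Real.sqrt (2 * Real.pi))⁻¹ * Real.exp (-x ^ 2 / 2))
            = (Real.sqrt (2 * Real.pi) * (Real.sqrt (2 * Real.pi))⁻¹)
              * (Real.exp (x ^ 2 / 2) * Real.exp (-x ^ 2 / 2)) := by rw [hK]; ring
          _ = 1 := by rw [e1, e2, mul_one]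
      calc (1:ℝ) = K * ((Real.sqrt (2 * Real.pi))⁻¹ * Real.exp (-x ^ 2 / 2)) := this.symm
        _ ≤ K * gpdf t := by
          apply mul_le_mul_of_nonneg_left hgp hKpos.le
    calc h t = 1 * h t := (one_mul _).symm
      _ ≤ (K * gpdf t) * h t := mul_le_mul_of_nonneg_right h1K (hnn t)
      _ = K * (gpdf t * h t) := by ring
  have step2 : (∫ t in (-x : ℝ)..x, K * (gpdf t * h t)) =
      K * ∫ t in (-x : ℝ)..x, gpdf t * h t := intervalIntegral.integral_const_mul _ _
  have step3 : (∫ t in (-x : ℝ)..x, gpdf t * h t) ≤ ∫ t, gpdf t * h t := by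
    rw [intervalIntegral.integral_of_le (by linarith)]
    apply setIntegral_le_integral Ig
    apply Filter.Eventually.of_forall
    intro t
    exact mul_nonneg (gpdf_pos t).le (hnn t)
  have hInn : 0 ≤ ∫ t, gpdf t * h t :=
    integral_nonneg fun t => mul_nonneg (gpdf_pos t).le (hnn t)
  calc (∫ t in (-x : ℝ)..x, h t) ≤ K * ∫ t in (-x : ℝ)..x, gpdf t * h t := by
        rw [← step2]; exact step1
    _ ≤ K * ∫ t, gpdf t * h t := mul_le_mul_of_nonneg_left step3 hKpos.le
    _ = (Real.sqrt (2 * Real.pi) * ∫ t, gpdf t * h t) * Real.exp (x ^ 2 / 2) := by rw [hK]; ring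

set_option maxHeartbeats 1000000 in
lemma stein (f : ℝ → ℝ) (hf : ContDiff ℝ 1 f)
    (hf2 : Integrable (fun z => (f z) ^ 2) (gaussianReal 0 1))
    (hf'2 : Integrable (fun z => (deriv f z) ^ 2) (gaussianReal 0 1)) :
    Integrable (fun z => z * f z) (gaussianReal 0 1) ∧
    Integrable (deriv f) (gaussianReal 0 1) ∧
    ∫ z, z * f z ∂(gaussianReal 0 1) = ∫ z, deriv f z ∂(gaussianReal 0 1) := by
  have hfc : Continuous f := hf.continuous
  have hf' : Continuous (deriv f) := hf.continuous_deriv le_rfl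
  have hdiff : Differentiable ℝ f := hf.differentiable one_ne_zero
  -- integrability of z * f z under the gaussian
  have hzf : Integrable (fun z => z * f z) (gaussianReal 0 1) := by
    have hbd : Integrable (fun z => (z ^ 2 + f z ^ 2) / 2) (gaussianReal 0 1) :=
      (integrable_sq_gr.add hf2).div_const 2
    apply hbd.mono' ((continuous_id.mul hfc).aestronglyMeasurable)
    apply Filter.Eventually.of_forall
    intro z
    simp only [Pi.mul_apply, id_eq]
    rw [Real.norm_eq_abs, abs_mul]
    nlinarith [sq_nonneg (|z| - |f z|), sq_abs z, sq_abs (f z), abs_nonneg z, abs_nonneg (f z)]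
  have hder : Integrable (deriv f) (gaussianReal 0 1) := by
    have : MemLp (deriv f) 2 (gaussianReal 0 1) :=
      (memLp_two_iff_integrable_sq hf'.aestronglyMeasurable).mpr hf'2
    exact this.integrable one_le_two
  refine ⟨hzf, hder, ?_⟩
  -- move to Lebesgue measure with density gpdf
  have I1 : Integrable (fun x => gpdf x * (x * f x)) := (integrable_gr_iff _).mp hzf
  have I2 : Integrable (fun x => gpdf x * deriv f x) := (integrable_gr_iff _).mp hder
  have Isq : Integrable (fun x => gpdf x * (deriv f x) ^ 2) := (integrable_gr_iff _).mp hf'2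
  -- the derivative of x ↦ f x * gpdf x
  have hG : ∀ x : ℝ, HasDerivAt (fun y => f y * gpdf y)
      (deriv f x * gpdf x - x * (f x * gpdf x)) x := by
    intro x
    have := ((hdiff x).hasDerivAt).mul (hasDerivAt_gpdf x)
    refine this.congr_deriv ?_
    ring
  have hD : Integrable (fun x => deriv f x * gpdf x - x * (f x * gpdf x)) := by
    apply Integrable.sub
    · exact I2.congr (Filter.Eventually.of_forall fun x => by ring)
    · exact I1.congr (Filter.Eventually.of_forall fun x => by ring)
  -- tail bounds
  set C : ℝ := Real.sqrt (2 * Real.pi) * ∫ t, gpdf t * (deriv f t) ^ 2 with hCdef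
  have hC0 : 0 ≤ C := by
    apply mul_nonneg (Real.sqrt_nonneg _)
    exact integral_nonneg fun t => mul_nonneg (gpdf_pos t).le (sq_nonneg _)
  have hCb : ∀ x : ℝ, 0 ≤ x → (∫ t in (0:ℝ)..x, (deriv f t) ^ 2) ≤ C * Real.exp (x ^ 2 / 2) := by
    intro x hx
    have h1 : (∫ t in (0:ℝ)..x, (deriv f t) ^ 2) ≤ ∫ t in (-x:ℝ)..x, (deriv f t) ^ 2 := by
      apply intervalIntegral.integral_mono_interval (by linarith) hx le_rfl
      · exact Filter.Eventually.of_forall fun t => sq_nonneg _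
      · exact ((hf'.pow 2).intervalIntegrable _ _)
    exact h1.trans (interval_sq_bound _ (hf'.pow 2) (fun t => sq_nonneg _) Isq x hx)
  have htop : Tendsto (fun x => f x * gpdf x) atTop (𝓝 0) :=
    tendsto_mul_gpdf_atTop f hf C hC0 hCb
  -- at -∞ via the reflection g y = f (-y)
  have hbot : Tendsto (fun x => f x * gpdf x) atBot (𝓝 0) := by
    set g : ℝ → ℝ := fun y => f (-y) with hgdef
    have hgC : ContDiff ℝ 1 g := hf.comp (contDiff_neg)
    have hgd : ∀ y : ℝ, deriv g y = -deriv f (-y) := by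
      intro y
      have : HasDerivAt g (-deriv f (-y)) y := by
        have h1 := ((hdiff (-y)).hasDerivAt).comp y (hasDerivAt_neg y)
        exact h1.congr_deriv (by ring)
      exact this.deriv
    have hgCb : ∀ x : ℝ, 0 ≤ x →
        (∫ t in (0:ℝ)..x, (deriv g t) ^ 2) ≤ C * Real.exp (x ^ 2 / 2) := by
      intro x hx
      have e1 : (∫ t in (0:ℝ)..x, (deriv g t) ^ 2) = ∫ t in (0:ℝ)..x, (deriv f (-t)) ^ 2 := by
        apply intervalIntegral.integral_congr
        intro t _
        simp only [hgd, neg_sq]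
      have e2 : (∫ t in (0:ℝ)..x, (deriv f (-t)) ^ 2) = ∫ t in (-x:ℝ)..(0:ℝ), (deriv f t) ^ 2 := by
        have := intervalIntegral.integral_comp_neg (a := (0:ℝ)) (b := x)
          (fun t => (deriv f t) ^ 2)
        simpa using this
      have h1 : (∫ t in (-x:ℝ)..(0:ℝ), (deriv f t) ^ 2) ≤ ∫ t in (-x:ℝ)..x, (deriv f t) ^ 2 := by
        apply intervalIntegral.integral_mono_interval le_rfl (by linarith) hx
        · exact Filter.Eventually.of_forall fun t => sq_nonneg _
        · exact ((hf'.pow 2).intervalIntegrable _ _)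
      rw [e1, e2]
      exact h1.trans (interval_sq_bound _ (hf'.pow 2) (fun t => sq_nonneg _) Isq x hx)
    have hgtop : Tendsto (fun y => g y * gpdf y) atTop (𝓝 0) :=
      tendsto_mul_gpdf_atTop g hgC C hC0 hgCb
    have : Tendsto (fun x => f x * gpdf x) atBot (𝓝 0) := by
      have hcomp := hgtop.comp tendsto_neg_atBot_atTop
      refine hcomp.congr fun x => ?_
      simp only [Function.comp, hgdef]
      rw [neg_neg, gpdf_even]
    exact this
  -- integration by parts on ℝ
  have key : (∫ x, (deriv f x * gpdf x - x * (f x * gpdf x))) = 0 - 0 :=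
    MeasureTheory.integral_of_hasDerivAt_of_tendsto hG hD hbot htop
  have J2 : Integrable (fun x => deriv f x * gpdf x) :=
    I2.congr (Filter.EventuallyEq.of_eq (funext fun x => mul_comm _ _))
  have J1 : Integrable (fun x => x * (f x * gpdf x)) :=
    I1.congr (Filter.EventuallyEq.of_eq (funext fun x => by ring))
  have hsplit : (∫ x, (deriv f x * gpdf x - x * (f x * gpdf x)))
      = (∫ x, gpdf x * deriv f x) - ∫ x, gpdf x * (x * f x) := by
    rw [integral_sub J2 J1]
    congr 1
    · exact integral_congr_ae (Filter.EventuallyEq.of_eq (funext fun x => mul_comm _ _))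
    · exact integral_congr_ae (Filter.EventuallyEq.of_eq (funext fun x => by ring))
  rw [integral_gr (fun z => z * f z), integral_gr (deriv f)]
  have : (∫ x, gpdf x * deriv f x) - ∫ x, gpdf x * (x * f x) = 0 := by
    rw [← hsplit, key]; ring
  linarith [this]

lemma cauchy_schwarz_integral (μ : Measure ℝ) (f g : ℝ → ℝ)
    (hf2 : Integrable (fun x => f x ^ 2) μ) (hg2 : Integrable (fun x => g x ^ 2) μ)
    (hfg : Integrable (fun x => f x * g x) μ) :
    (∫ x, f x * g x ∂μ) ^ 2 ≤ (∫ x, f x ^ 2 ∂μ) * ∫ x, g x ^ 2 ∂μ := by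
  set A := ∫ x, f x ^ 2 ∂μ with hA
  set B := ∫ x, f x * g x ∂μ with hB
  set Cc := ∫ x, g x ^ 2 ∂μ with hCc
  have h : ∀ t : ℝ, 0 ≤ A * (t * t) + (2 * B) * t + Cc := by
    intro t
    have heq : (fun x => (t * f x + g x) ^ 2)
        = fun x => t ^ 2 * f x ^ 2 + 2 * t * (f x * g x) + g x ^ 2 := funext fun x => by ring
    have hint1 : Integrable (fun x => t ^ 2 * f x ^ 2 + 2 * t * (f x * g x)) μ :=
      (hf2.const_mul _).add (hfg.const_mul _)
    have hpos : 0 ≤ ∫ x, (t * f x + g x) ^ 2 ∂μ := integral_nonneg fun x => sq_nonneg _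
    have hexp : ∫ x, (t * f x + g x) ^ 2 ∂μ = A * (t * t) + (2 * B) * t + Cc := by
      rw [heq, integral_add hint1 hg2, integral_add (hf2.const_mul _) (hfg.const_mul _),
        integral_const_mul, integral_const_mul]
      ring
    linarith [hexp ▸ hpos]
  have hd := discrim_le_zero h
  rw [discrim] at hd
  nlinarith [hd]

lemma integral_id_gr : (∫ z, z ∂(gaussianReal 0 1)) = 0 ∧
    (∫ z, z ^ 2 ∂(gaussianReal 0 1)) = 1 ∧ Integrable (fun z => z) (gaussianReal 0 1) := by
  have hid2 : Integrable (fun z : ℝ => z ^ 2) (gaussianReal 0 1) := integrable_sq_gr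
  have hidint : Integrable (fun z : ℝ => z) (gaussianReal 0 1) := by
    have : MemLp (fun z : ℝ => z) 2 (gaussianReal 0 1) :=
      (memLp_two_iff_integrable_sq continuous_id.aestronglyMeasurable).mpr hid2
    exact this.integrable one_le_two
  constructor
  · -- Stein with the constant function 1
    have h := stein (fun _ => (1:ℝ)) contDiff_const (by simpa using integrable_const (1:ℝ))
      (by simp [deriv_const'])
    obtain ⟨_, _, heq⟩ := h
    have h1 : (∫ z, z * (1:ℝ) ∂(gaussianReal 0 1)) = ∫ z, z ∂(gaussianReal 0 1) := by
      apply integral_congr_ae; exact Filter.Eventually.of_forall fun z => mul_one z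
    have h2 : (∫ z, deriv (fun _ => (1:ℝ)) z ∂(gaussianReal 0 1)) = 0 := by
      simp [deriv_const']
    rw [h1, h2] at heq; exact heq
  constructor
  · -- Stein with the identity
    have h := stein (fun z => z) contDiff_id hid2
      (by simp [deriv_id''])
    obtain ⟨_, _, heq⟩ := h
    have h1 : (∫ z, z * z ∂(gaussianReal 0 1)) = ∫ z, z ^ 2 ∂(gaussianReal 0 1) := by
      apply integral_congr_ae; exact Filter.Eventually.of_forall fun z => (sq z).symm
    have h2 : (∫ z, deriv (fun z : ℝ => z) z ∂(gaussianReal 0 1)) = 1 := by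
      simp [deriv_id'']
    rw [h1, h2] at heq; exact heq
  · exact hidint

lemma variance_lb (f : ℝ → ℝ) (hf : ContDiff ℝ 1 f)
    (hf2 : Integrable (fun z => (f z) ^ 2) (gaussianReal 0 1))
    (hf'2 : Integrable (fun z => (deriv f z) ^ 2) (gaussianReal 0 1)) :
    variance f (gaussianReal 0 1) ≥ (∫ z, deriv f z ∂(gaussianReal 0 1)) ^ 2 := by
  obtain ⟨hzf, hder, hstein⟩ := stein f hf hf2 hf'2
  obtain ⟨hz0, hz2, hidint⟩ := integral_id_gr
  have hfc : Continuous f := hf.continuous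
  have hmem : MemLp f 2 (gaussianReal 0 1) :=
    (memLp_two_iff_integrable_sq hfc.aestronglyMeasurable).mpr hf2
  have hfi : Integrable f (gaussianReal 0 1) := hmem.integrable one_le_two
  set m := ∫ z, f z ∂(gaussianReal 0 1) with hm
  have hg2 : Integrable (fun z => (f z - m) ^ 2) (gaussianReal 0 1) := by
    have h : (fun z => (f z - m) ^ 2) = fun z => f z ^ 2 - (2 * m) * f z + m ^ 2 :=
      funext fun z => by ring
    rw [h]
    exact (hf2.sub (hfi.const_mul _)).add (integrable_const _)
  have hzg : Integrable (fun z => z * (f z - m)) (gaussianReal 0 1) := by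
    have h : (fun z => z * (f z - m)) = fun z => z * f z - m * z := funext fun z => by ring
    rw [h]
    exact hzf.sub (hidint.const_mul m)
  have hcov : (∫ z, z * (f z - m) ∂(gaussianReal 0 1)) = ∫ z, deriv f z ∂(gaussianReal 0 1) := by
    have h1 : (fun z => z * (f z - m)) = fun z => z * f z - m * z := funext fun z => by ring
    rw [h1, integral_sub hzf (hidint.const_mul m), integral_const_mul, hz0]
    simpa using hstein
  have hcs := cauchy_schwarz_integral (gaussianReal 0 1) (fun z => z) (fun z => f z - m)
    integrable_sq_gr hg2 hzg
  rw [hz2, one_mul] at hcs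
  have hvar : variance f (gaussianReal 0 1) = ∫ z, (f z - m) ^ 2 ∂(gaussianReal 0 1) := by
    rw [variance_eq_integral hmem.aestronglyMeasurable.aemeasurable]
  rw [ge_iff_le, hvar, ← hcov]
  exact hcs

/-- Gaussian (Chernoff) lower variance bound `Var(f(Z)) ≥ (E[f'(Z)])²` for `Z ~ N(0,1)`,
and in particular nonnegativity of the coefficient
`d₀ = E[σ(√τ Z)²] − (E[σ(√τ Z)])² − τ(E[σ'(√τ Z)])²`. -/
theorem gaussian_variance_lower_bound (f : ℝ → ℝ) (hf : ContDiff ℝ 1 f)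
    (hf2 : Integrable (fun z => (f z) ^ 2) (gaussianReal 0 1))
    (hf'2 : Integrable (fun z => (deriv f z) ^ 2) (gaussianReal 0 1))
    (σ : ℝ → ℝ) (hσ : ContDiff ℝ 1 σ) (τ : ℝ) (hτ : 0 < τ)
    (hσ2 : Integrable (fun z => (σ (Real.sqrt τ * z)) ^ 2) (gaussianReal 0 1))
    (hσ'2 : Integrable (fun z => (deriv σ (Real.sqrt τ * z)) ^ 2) (gaussianReal 0 1)) :
    variance f (gaussianReal 0 1) ≥ (∫ z, deriv f z ∂(gaussianReal 0 1)) ^ 2 ∧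
    0 ≤ (∫ z, (σ (Real.sqrt τ * z)) ^ 2 ∂(gaussianReal 0 1))
        - (∫ z, σ (Real.sqrt τ * z) ∂(gaussianReal 0 1)) ^ 2
        - τ * (∫ z, deriv σ (Real.sqrt τ * z) ∂(gaussianReal 0 1)) ^ 2 := by
  refine ⟨variance_lb f hf hf2 hf'2, ?_⟩
  have hτ' : (0:ℝ) < Real.sqrt τ := Real.sqrt_pos.mpr hτ
  have hττ : Real.sqrt τ * Real.sqrt τ = τ := Real.mul_self_sqrt hτ.le
  have hgC : ContDiff ℝ 1 (fun z => σ (Real.sqrt τ * z)) :=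
    hσ.comp (contDiff_const.mul contDiff_id)
  have hgd : ∀ z : ℝ, HasDerivAt (fun z => σ (Real.sqrt τ * z))
      (Real.sqrt τ * deriv σ (Real.sqrt τ * z)) z := by
    intro z
    have h1 : HasDerivAt (fun z : ℝ => Real.sqrt τ * z) (Real.sqrt τ) z := by
      simpa using (hasDerivAt_id z).const_mul (Real.sqrt τ)
    have h2 := (((hσ.differentiable one_ne_zero) (Real.sqrt τ * z)).hasDerivAt).comp z h1
    rw [mul_comm]
    exact h2
  have hderiv_g : deriv (fun z => σ (Real.sqrt τ * z))
      = fun z => Real.sqrt τ * deriv σ (Real.sqrt τ * z) := funext fun z => (hgd z).deriv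
  have hg'2 : Integrable (fun z => (deriv (fun z => σ (Real.sqrt τ * z)) z) ^ 2)
      (gaussianReal 0 1) := by
    rw [hderiv_g]
    have h : (fun z => (Real.sqrt τ * deriv σ (Real.sqrt τ * z)) ^ 2)
        = fun z => τ * (deriv σ (Real.sqrt τ * z)) ^ 2 := funext fun z => by
      rw [mul_pow, Real.sq_sqrt hτ.le]
    rw [h]
    exact hσ'2.const_mul τ
  have hvlb := variance_lb (fun z => σ (Real.sqrt τ * z)) hgC hσ2 hg'2
  have hint_deriv : (∫ z, deriv (fun z => σ (Real.sqrt τ * z)) z ∂(gaussianReal 0 1))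
      = Real.sqrt τ * ∫ z, deriv σ (Real.sqrt τ * z) ∂(gaussianReal 0 1) := by
    rw [hderiv_g, integral_const_mul]
  have hmemg : MemLp (fun z => σ (Real.sqrt τ * z)) 2 (gaussianReal 0 1) :=
    (memLp_two_iff_integrable_sq
      (hσ.continuous.comp (continuous_const.mul continuous_id)).aestronglyMeasurable).mpr hσ2
  have hvar : variance (fun z => σ (Real.sqrt τ * z)) (gaussianReal 0 1)
      = (∫ z, (σ (Real.sqrt τ * z)) ^ 2 ∂(gaussianReal 0 1))
        - (∫ z, σ (Real.sqrt τ * z) ∂(gaussianReal 0 1)) ^ 2 := by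
    rw [variance_eq_sub hmemg]
    congr 1
  have hsq : (Real.sqrt τ * ∫ z, deriv σ (Real.sqrt τ * z) ∂(gaussianReal 0 1)) ^ 2
      = τ * (∫ z, deriv σ (Real.sqrt τ * z) ∂(gaussianReal 0 1)) ^ 2 := by
    rw [mul_pow, Real.sq_sqrt hτ.le]
  rw [hint_deriv, hsq, hvar] at hvlb
  linarith
end

section
/- Let Z be a standard Gaussian random variable and f : ℝ → ℝ twice continuously differentiable with E[f(Z)²], E[f'(Z)²], E[f''(Z)²] all finite. Then Var(f(Z)) ≥ (E[f'(Z)])² + (1/2)(E[f''(Z)])². -/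
open MeasureTheory ProbabilityTheory Filter Real Set
open scoped NNReal ENNReal

-- transfer lemmas
lemma gint (h : ℝ → ℝ) :
    ∫ x, h x ∂(gaussianReal 0 1) = ∫ x, h x * gaussianPDFReal 0 1 x := by
  rw [gaussianReal_of_var_ne_zero 0 one_ne_zero]
  have h1 : gaussianPDF 0 1 = fun x => ((Real.toNNReal (gaussianPDFReal 0 1 x) : ℝ≥0) : ℝ≥0∞) := rfl
  rw [h1, integral_withDensity_eq_integral_smul
    ((measurable_gaussianPDFReal 0 1).real_toNNReal) h]
  congr 1; ext x
  rw [NNReal.smul_def, Real.coe_toNNReal _ (gaussianPDFReal_nonneg 0 1 x), smul_eq_mul, mul_comm]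

lemma gintegrable (h : ℝ → ℝ) :
    Integrable h (gaussianReal 0 1) ↔ Integrable (fun x => h x * gaussianPDFReal 0 1 x) := by
  rw [gaussianReal_of_var_ne_zero 0 one_ne_zero]
  have h1 : gaussianPDF 0 1 = fun x => ((Real.toNNReal (gaussianPDFReal 0 1 x) : ℝ≥0) : ℝ≥0∞) := rfl
  rw [h1, integrable_withDensity_iff_integrable_smul
    ((measurable_gaussianPDFReal 0 1).real_toNNReal)]
  apply integrable_congr
  filter_upwards with x
  rw [NNReal.smul_def, Real.coe_toNNReal _ (gaussianPDFReal_nonneg 0 1 x), smul_eq_mul, mul_comm]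

lemma phi_eq (x : ℝ) : gaussianPDFReal 0 1 x = (√(2 * π))⁻¹ * rexp (-(1/2) * x ^ 2) := by
  simp only [gaussianPDFReal, NNReal.coe_one, mul_one, sub_zero]
  ring_nf

lemma hasDerivAt_phi (x : ℝ) :
    HasDerivAt (gaussianPDFReal 0 1) (-x * gaussianPDFReal 0 1 x) x := by
  have h : gaussianPDFReal 0 1 = fun y : ℝ => (√(2 * π))⁻¹ * rexp (-(1/2) * y ^ 2) :=
    funext phi_eq
  rw [h]
  have h1 : HasDerivAt (fun y : ℝ => -(1/2) * y ^ 2) (-x) x := by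
    have := (hasDerivAt_pow 2 x).const_mul (-(1/2) : ℝ)
    simpa using this.congr_deriv (by ring)
  have h2 := (h1.exp).const_mul ((√(2 * π))⁻¹)
  refine h2.congr_deriv ?_
  ring

lemma gauss_ibp (g : ℝ → ℝ) (hg : Differentiable ℝ g)
    (h0 : Integrable g (gaussianReal 0 1))
    (h1 : Integrable (deriv g) (gaussianReal 0 1))
    (h2 : Integrable (fun x => x * g x) (gaussianReal 0 1)) :
    ∫ x, deriv g x ∂(gaussianReal 0 1) = ∫ x, x * g x ∂(gaussianReal 0 1) := by
  rw [gint, gint]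
  have h0' := (gintegrable g).mp h0
  have h1' := (gintegrable _).mp h1
  have h2' := (gintegrable _).mp h2
  have hF : ∀ x, HasDerivAt (fun y => g y * gaussianPDFReal 0 1 y)
      (deriv g x * gaussianPDFReal 0 1 x - x * g x * gaussianPDFReal 0 1 x) x := by
    intro x
    have := ((hg x).hasDerivAt.mul (hasDerivAt_phi x))
    refine this.congr_deriv ?_
    ring
  have hzero := integral_eq_zero_of_hasDerivAt_of_integrable hF
    (h1'.sub (by simpa [mul_assoc] using h2')) h0'
  rw [integral_sub h1' (by simpa [mul_assoc] using h2')] at hzero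
  have : ∫ x, x * g x * gaussianPDFReal 0 1 x = ∫ x, (fun x => x * g x) x * gaussianPDFReal 0 1 x := rfl
  linarith [hzero]

lemma integrable_pow_gauss (n : ℕ) :
    Integrable (fun x : ℝ => x ^ n) (gaussianReal 0 1) := by
  rw [gintegrable]
  have h : Integrable (fun x : ℝ => x ^ (n : ℝ) * rexp (-(1/2) * x ^ 2)) :=
    integrable_rpow_mul_exp_neg_mul_sq (by norm_num) (lt_of_lt_of_le (by norm_num) (Nat.cast_nonneg n))
  have h2 : Integrable (fun x : ℝ => (√(2 * π))⁻¹ * (x ^ n * rexp (-(1/2) * x ^ 2))) := by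
    refine Integrable.const_mul ?_ _
    refine h.congr ?_
    filter_upwards with x
    rw [Real.rpow_natCast]
  refine h2.congr ?_
  filter_upwards with x
  rw [phi_eq]; ring

lemma memL2_pow_gauss (n : ℕ) :
    MemLp (fun x : ℝ => x ^ n) 2 (gaussianReal 0 1) := by
  rw [memLp_two_iff_integrable_sq (by fun_prop)]
  have := integrable_pow_gauss (2 * n)
  refine this.congr ?_
  filter_upwards with x
  rw [mul_comm 2 n, pow_mul]

lemma mul_L2_integrable {p q : ℝ → ℝ} (hp : MemLp p 2 (gaussianReal 0 1))
    (hq : MemLp q 2 (gaussianReal 0 1)) :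
    Integrable (fun x => p x * q x) (gaussianReal 0 1) := by
  have := hq.smul (𝕜 := ℝ) hp (r := 1)
  rw [memLp_one_iff_integrable] at this
  refine this.congr ?_
  filter_upwards with x
  simp [mul_comm]

lemma integrable_pow_gauss' (n : ℕ) (c : ℝ) :
    Integrable (fun x : ℝ => c * x ^ n) (gaussianReal 0 1) :=
  (integrable_pow_gauss n).const_mul c

lemma moment_one : ∫ x, x ∂(gaussianReal 0 1) = 0 := by
  have h := gauss_ibp (fun _ => (1:ℝ)) (differentiable_const 1) (integrable_const 1)
    (by simpa using integrable_const (0:ℝ))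
    (by simpa using integrable_pow_gauss 1)
  simp only [deriv_const', integral_zero, mul_one] at h
  exact h.symm

lemma moment_two : ∫ x, x ^ 2 ∂(gaussianReal 0 1) = 1 := by
  have h := gauss_ibp (fun y => y) differentiable_id (by simpa using integrable_pow_gauss 1)
    (by simpa using integrable_const (1:ℝ))
    (by simpa [sq] using integrable_pow_gauss 2)
  simp only [deriv_id''] at h
  rw [integral_const] at h
  simp only [probReal_univ, smul_eq_mul, mul_one] at h
  rw [h]
  apply integral_congr_ae
  filter_upwards with x
  ring

lemma moment_three : ∫ x, x ^ 3 ∂(gaussianReal 0 1) = 0 := by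
  have hd : deriv (fun y : ℝ => y ^ 2) = fun y => 2 * y := by
    funext y; simpa using (hasDerivAt_pow 2 y).deriv
  have h := gauss_ibp (fun y => y ^ 2) (by fun_prop) (integrable_pow_gauss 2)
    (by rw [hd]; simpa using integrable_pow_gauss' 1 2)
    (by simpa [pow_succ, mul_comm] using integrable_pow_gauss 3)
  rw [hd] at h
  have h1 : ∫ x, 2 * x ∂(gaussianReal 0 1) = 0 := by
    rw [integral_const_mul, _root_.moment_one, mul_zero]
  rw [h1] at h
  rw [show (∫ x, x * x ^ 2 ∂(gaussianReal 0 1)) = ∫ x, x ^ 3 ∂(gaussianReal 0 1) from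
    integral_congr_ae (by filter_upwards with x; ring)] at h
  exact h.symm

lemma moment_four : ∫ x, x ^ 4 ∂(gaussianReal 0 1) = 3 := by
  have hd : deriv (fun y : ℝ => y ^ 3) = fun y => 3 * y ^ 2 := by
    funext y; simpa using (hasDerivAt_pow 3 y).deriv
  have h := gauss_ibp (fun y => y ^ 3) (by fun_prop) (integrable_pow_gauss 3)
    (by rw [hd]; exact integrable_pow_gauss' 2 3)
    (by simpa [pow_succ, mul_comm] using integrable_pow_gauss 4)
  rw [hd] at h
  rw [integral_const_mul, moment_two, mul_one] at h
  rw [show (∫ x, x * x ^ 3 ∂(gaussianReal 0 1)) = ∫ x, x ^ 4 ∂(gaussianReal 0 1) from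
    integral_congr_ae (by filter_upwards with x; ring)] at h
  exact h.symm

lemma integrable_poly_gauss (k0 k1 k2 k3 k4 : ℝ) :
    Integrable (fun x : ℝ => k0 + k1 * x + k2 * x ^ 2 + k3 * x ^ 3 + k4 * x ^ 4)
      (gaussianReal 0 1) := by
  have h1 : Integrable (fun x : ℝ => k1 * x) (gaussianReal 0 1) := by
    simpa using integrable_pow_gauss' 1 k1
  exact ((((integrable_const k0).add h1).add (integrable_pow_gauss' 2 k2)).add
    (integrable_pow_gauss' 3 k3)).add (integrable_pow_gauss' 4 k4)

lemma integral_poly_gauss (k0 k1 k2 k3 k4 : ℝ) :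
    ∫ x, (k0 + k1 * x + k2 * x ^ 2 + k3 * x ^ 3 + k4 * x ^ 4) ∂(gaussianReal 0 1)
      = k0 + k2 + 3 * k4 := by
  have h1 : Integrable (fun x : ℝ => k1 * x) (gaussianReal 0 1) := by
    simpa using integrable_pow_gauss' 1 k1
  have i2 : Integrable (fun x : ℝ => k0 + k1 * x) (gaussianReal 0 1) :=
    (integrable_const k0).add h1
  have i3 : Integrable (fun x : ℝ => k0 + k1 * x + k2 * x ^ 2) (gaussianReal 0 1) :=
    i2.add (integrable_pow_gauss' 2 k2)
  have i4 : Integrable (fun x : ℝ => k0 + k1 * x + k2 * x ^ 2 + k3 * x ^ 3) (gaussianReal 0 1) :=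
    i3.add (integrable_pow_gauss' 3 k3)
  rw [integral_add i4 (integrable_pow_gauss' 4 k4), integral_add i3 (integrable_pow_gauss' 3 k3),
      integral_add i2 (integrable_pow_gauss' 2 k2), integral_add (integrable_const k0) h1,
      integral_const_mul, integral_const_mul, integral_const_mul, integral_const_mul,
      _root_.moment_one, moment_two, moment_three, moment_four, integral_const]
  simp
  ring

/-- Two-term Hermite lower bound on the Gaussian variance:
`Var(f(Z)) ≥ (E[f'(Z)])² + (1/2)(E[f''(Z)])²` for `Z ~ N(0,1)`. -/
theorem gaussian_variance_two_term_lower_bound (f : ℝ → ℝ) (hf : ContDiff ℝ 2 f)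
    (hf2 : Integrable (fun z => (f z) ^ 2) (gaussianReal 0 1))
    (hf'2 : Integrable (fun z => (deriv f z) ^ 2) (gaussianReal 0 1))
    (hf''2 : Integrable (fun z => (deriv (deriv f) z) ^ 2) (gaussianReal 0 1)) :
    variance f (gaussianReal 0 1) ≥ (∫ z, deriv f z ∂(gaussianReal 0 1)) ^ 2
      + (1 / 2) * (∫ z, deriv (deriv f) z ∂(gaussianReal 0 1)) ^ 2 := by
  have hf1 : ContDiff ℝ 1 f := hf.of_le one_le_two
  have hfc : ContDiff ℝ ((1 : ℕ∞) + 1) f := by exact_mod_cast hf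
  have hdf : ContDiff ℝ 1 (deriv f) := (contDiff_succ_iff_deriv.mp hfc).2.2
  have hdiff : Differentiable ℝ f := hf1.differentiable one_ne_zero
  have hdiff' : Differentiable ℝ (deriv f) := hdf.differentiable one_ne_zero
  -- L² memberships
  have hL2f : MemLp f 2 (gaussianReal 0 1) :=
    (memLp_two_iff_integrable_sq hf.continuous.aestronglyMeasurable).mpr hf2
  have hL2f' : MemLp (deriv f) 2 (gaussianReal 0 1) :=
    (memLp_two_iff_integrable_sq hdf.continuous.aestronglyMeasurable).mpr hf'2
  have hL2f'' : MemLp (deriv (deriv f)) 2 (gaussianReal 0 1) :=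
    (memLp_two_iff_integrable_sq
      (hdf.continuous_deriv le_rfl).aestronglyMeasurable).mpr hf''2
  have hx : MemLp (fun x : ℝ => x) 2 (gaussianReal 0 1) := by
    simpa using memL2_pow_gauss 1
  have hx2 : MemLp (fun x : ℝ => x ^ 2) 2 (gaussianReal 0 1) := memL2_pow_gauss 2
  -- integrabilities
  have intf : Integrable f (gaussianReal 0 1) := hL2f.integrable one_le_two
  have intf' : Integrable (deriv f) (gaussianReal 0 1) := hL2f'.integrable one_le_two
  have intf'' : Integrable (deriv (deriv f)) (gaussianReal 0 1) := hL2f''.integrable one_le_two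
  have int_xf : Integrable (fun x => x * f x) (gaussianReal 0 1) := mul_L2_integrable hx hL2f
  have int_xf' : Integrable (fun x => x * deriv f x) (gaussianReal 0 1) :=
    mul_L2_integrable hx hL2f'
  have int_x2f : Integrable (fun x => x ^ 2 * f x) (gaussianReal 0 1) :=
    mul_L2_integrable hx2 hL2f
  -- notation
  set m := ∫ z, f z ∂(gaussianReal 0 1) with hm
  set a := ∫ z, deriv f z ∂(gaussianReal 0 1) with ha
  set b := ∫ z, deriv (deriv f) z ∂(gaussianReal 0 1) with hb
  -- integration by parts identities
  have hA : a = ∫ x, x * f x ∂(gaussianReal 0 1) := gauss_ibp f hdiff intf intf' int_xf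
  have hB : b = ∫ x, x * deriv f x ∂(gaussianReal 0 1) :=
    gauss_ibp (deriv f) hdiff' intf' intf'' int_xf'
  have hdg : deriv (fun y => y * f y) = fun x => f x + x * deriv f x := by
    funext x
    have hx1 : HasDerivAt (fun y => y * f y) (1 * f x + x * deriv f x) x := by
      exact (hasDerivAt_id' x).mul (hdiff x).hasDerivAt
    rw [hx1.deriv]
    ring
  have hC : ∫ x, x ^ 2 * f x ∂(gaussianReal 0 1) = m + b := by
    have h := gauss_ibp (fun y => y * f y) (differentiable_id.mul hdiff) int_xf
      (by rw [hdg]; exact intf.add int_xf')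
      (by refine int_x2f.congr ?_; filter_upwards with x; ring)
    rw [hdg, integral_add intf int_xf'] at h
    rw [show (∫ x, x * (x * f x) ∂(gaussianReal 0 1)) = ∫ x, x ^ 2 * f x ∂(gaussianReal 0 1)
      from integral_congr_ae (by filter_upwards with x; ring)] at h
    rw [← h, hB]
  -- variance formula
  have hvar : variance f (gaussianReal 0 1) = (∫ x, f x ^ 2 ∂(gaussianReal 0 1)) - m ^ 2 := by
    rw [variance_eq_sub hL2f]
    congr 1
  -- Bessel
  set c := b / 2 with hc
  have expand : ∀ x : ℝ, (f x - m - a * x - c * (x ^ 2 - 1)) ^ 2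
      = f x ^ 2 + ((2 * (c - m)) * f x + ((-2 * a) * (x * f x) + ((-2 * c) * (x ^ 2 * f x)
        + ((c - m) ^ 2 + (2 * a * (m - c)) * x + (a ^ 2 + 2 * c * (m - c)) * x ^ 2
          + (2 * a * c) * x ^ 3 + c ^ 2 * x ^ 4)))) := by
    intro x; ring
  have hP : 0 ≤ ∫ x, (f x - m - a * x - c * (x ^ 2 - 1)) ^ 2 ∂(gaussianReal 0 1) :=
    integral_nonneg fun x => sq_nonneg _
  have hval : ∫ x, (f x - m - a * x - c * (x ^ 2 - 1)) ^ 2 ∂(gaussianReal 0 1)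
      = (∫ x, f x ^ 2 ∂(gaussianReal 0 1)) + ((2 * (c - m)) * m + ((-2 * a) * a + ((-2 * c) * (m + b)
        + ((c - m) ^ 2 + (a ^ 2 + 2 * c * (m - c)) + 3 * (c ^ 2))))) := by
    rw [integral_congr_ae (ae_of_all _ expand)]
    have ip : Integrable (fun x : ℝ => (c - m) ^ 2 + (2 * a * (m - c)) * x
        + (a ^ 2 + 2 * c * (m - c)) * x ^ 2 + (2 * a * c) * x ^ 3 + c ^ 2 * x ^ 4)
        (gaussianReal 0 1) := integrable_poly_gauss _ _ _ _ _
    have j4 : Integrable (fun x : ℝ => (-2 * c) * (x ^ 2 * f x)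
        + ((c - m) ^ 2 + (2 * a * (m - c)) * x + (a ^ 2 + 2 * c * (m - c)) * x ^ 2
          + (2 * a * c) * x ^ 3 + c ^ 2 * x ^ 4)) (gaussianReal 0 1) :=
      (int_x2f.const_mul _).add ip
    have j3 : Integrable (fun x : ℝ => (-2 * a) * (x * f x) + ((-2 * c) * (x ^ 2 * f x)
        + ((c - m) ^ 2 + (2 * a * (m - c)) * x + (a ^ 2 + 2 * c * (m - c)) * x ^ 2
          + (2 * a * c) * x ^ 3 + c ^ 2 * x ^ 4))) (gaussianReal 0 1) :=
      (int_xf.const_mul _).add j4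
    have j2 : Integrable (fun x : ℝ => (2 * (c - m)) * f x + ((-2 * a) * (x * f x)
        + ((-2 * c) * (x ^ 2 * f x)
        + ((c - m) ^ 2 + (2 * a * (m - c)) * x + (a ^ 2 + 2 * c * (m - c)) * x ^ 2
          + (2 * a * c) * x ^ 3 + c ^ 2 * x ^ 4)))) (gaussianReal 0 1) :=
      (intf.const_mul _).add j3
    rw [integral_add hf2 j2, integral_add (intf.const_mul _) j3,
      integral_add (int_xf.const_mul _) j4,
      integral_add (int_x2f.const_mul _) ip,
      integral_const_mul, integral_const_mul, integral_const_mul,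
      integral_poly_gauss, ← hA, ← hm, hC]
  rw [hval] at hP
  rw [ge_iff_le, hvar]
  nlinarith [hP, sq_nonneg (m - c), sq_nonneg b]
end
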